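/- There is an absolute constant K ≥ 1 such that the following holds. Let c, c₁, c₂ > 0 with c₁ ≤ 1/2 and c ≥ 1/c₁, let 0 < α ≤ 1, μ > 0, C_ξ ≥ 0, a > 0, and t ≥ 1. Let x_0, …, x_t be real numbers such that the sequence is (c, c₁, c₂, α)-anomaly-free (in dimension one), and let ξ_0, …, ξ_{t−1} be reals with |ξ_s| ≤ C_ξ for all s. Then Σ_{s=0}^{t−1} | ξ_s · x_s · (μ + Σ_{r=0}^{t−1} x_r²)⁻¹ · x_t | + a·| μ·(μ + Σ_{s=0}^{t−1} x_s²)⁻¹ · x_t | ≤ K · max{ C_ξ·c²·t/μ + a·c , C_ξ/c₂² + c₁^{−1/(α+2)}·c₂^{−2/(α+2)}·( a·μ^{1/(α+2)} + C_ξ·t^{1/2}·μ^{−α/(2(α+2))} ) }. -/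
import Mathlib

open scoped BigOperators Classical
open Finset

/-- A one-dimensional sequence is `(c, c₁, c₂, α)`-anomaly-free (up to index `N`) if whenever
`|x_t| = M > c` there are at least `c₁ M^α` indices `s < t` with `|x_s| ≥ c₂ M`. -/
def AnomalyFree1 (x : ℕ → ℝ) (N : ℕ) (c c₁ c₂ α : ℝ) : Prop :=
  ∀ t < N, c < |x t| →
    c₁ * |x t| ^ α ≤
      (((Finset.range t).filter fun s => c₂ * |x t| ≤ |x s|).card : ℝ)

private lemma gm_le' {μ D S θ : ℝ} (hμ : 0 < μ) (hD : 0 < D) (h0 : 0 ≤ θ) (h1 : θ ≤ 1)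
    (hSμ : μ ≤ S) (hSD : D ≤ S) : μ ^ θ * D ^ (1 - θ) ≤ S := by
  have hS : 0 < S := hμ.trans_le hSμ
  have h1' : (0:ℝ) ≤ 1 - θ := by linarith
  calc μ ^ θ * D ^ (1 - θ) ≤ S ^ θ * S ^ (1 - θ) :=
        mul_le_mul (Real.rpow_le_rpow hμ.le hSμ h0) (Real.rpow_le_rpow hD.le hSD h1')
          (Real.rpow_nonneg hD.le _) (Real.rpow_nonneg hS.le _)
    _ = S ^ (θ + (1 - θ)) := (Real.rpow_add hS _ _).symm
    _ = S := by norm_num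

private lemma D_rpow' {c₁ c₂ M α : ℝ} (h1 : 0 ≤ c₁) (h2 : 0 ≤ c₂) (hM : 0 ≤ M) (hα : 0 < α) :
    (c₁ * c₂ ^ 2 * M ^ (α + 2)) ^ ((1:ℝ)/(α+2))
      = c₁ ^ ((1:ℝ)/(α+2)) * c₂ ^ ((2:ℝ)/(α+2)) * M := by
  have hα2 : (0:ℝ) < α + 2 := by linarith
  rw [Real.mul_rpow (by positivity) (by positivity), Real.mul_rpow h1 (by positivity),
      ← Real.rpow_natCast c₂ 2, ← Real.rpow_mul h2, ← Real.rpow_mul hM]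
  congr 1
  · congr 1
    push_cast
    ring
  · rw [mul_one_div, div_self hα2.ne', Real.rpow_one]

set_option maxHeartbeats 1000000 in
/-- **one-dimensional prediction error bound.** -/
theorem one_dim_prediction_error_bound :
    ∃ K : ℝ, 1 ≤ K ∧
      ∀ (c c₁ c₂ α μ Cxi a : ℝ) (t : ℕ) (x ξ : ℕ → ℝ),
        0 < c → 0 < c₁ → 0 < c₂ → c₁ ≤ 1 / 2 → 1 / c₁ ≤ c →
        0 < α → α ≤ 1 → 0 < μ → 0 ≤ Cxi → 0 < a → 1 ≤ t →
        AnomalyFree1 x (t + 1) c c₁ c₂ α →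
        (∀ s, s ≤ t - 1 → |ξ s| ≤ Cxi) →
        (∑ s ∈ Finset.range t,
            |ξ s * x s * (μ + ∑ r ∈ Finset.range t, x r ^ 2)⁻¹ * x t|) +
          a * |μ * (μ + ∑ s ∈ Finset.range t, x s ^ 2)⁻¹ * x t| ≤
        K * max (Cxi * c ^ 2 * (t : ℝ) / μ + a * c)
          (Cxi / c₂ ^ 2 +
            c₁ ^ (-(1 : ℝ) / (α + 2)) * c₂ ^ (-(2 : ℝ) / (α + 2)) *
              (a * μ ^ ((1 : ℝ) / (α + 2)) +
                Cxi * (t : ℝ) ^ ((1 : ℝ) / 2) * μ ^ (-(α / (2 * (α + 2)))))) := by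
  refine ⟨2, by norm_num, ?_⟩
  intro c c₁ c₂ α μ Cxi a t x ξ hc hc₁ hc₂ hc₁le hcc₁ hα hα1 hμ hCxi ha ht hAF hξ
  have hα2 : (0:ℝ) < α + 2 := by linarith
  have ht0 : (0:ℝ) < (t:ℝ) := by exact_mod_cast ht
  set S : ℝ := μ + ∑ r ∈ Finset.range t, x r ^ 2 with hSdef
  have hsumsq : (0:ℝ) ≤ ∑ r ∈ Finset.range t, x r ^ 2 :=
    Finset.sum_nonneg fun i _ => sq_nonneg _
  have hS : 0 < S := by rw [hSdef]; linarith
  have hμS : μ ≤ S := by rw [hSdef]; linarith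
  set T : ℝ := ∑ s ∈ Finset.range t, |x s| with hTdef
  have hT0 : 0 ≤ T := Finset.sum_nonneg fun i _ => abs_nonneg _
  -- constants
  set C1 : ℝ := c₁ ^ ((1:ℝ)/(α+2)) with hC1def
  set C2 : ℝ := c₂ ^ ((2:ℝ)/(α+2)) with hC2def
  set Q : ℝ := μ ^ ((1:ℝ)/(α+2)) with hQdef
  set P : ℝ := μ ^ (α/(2*(α+2))) with hPdef
  have hC1 : 0 < C1 := Real.rpow_pos_of_pos hc₁ _
  have hC2 : 0 < C2 := Real.rpow_pos_of_pos hc₂ _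
  have hQ : 0 < Q := Real.rpow_pos_of_pos hμ _
  have hP : 0 < P := Real.rpow_pos_of_pos hμ _
  have e1 : c₁ ^ (-(1:ℝ)/(α+2)) = C1⁻¹ := by
    rw [neg_div, Real.rpow_neg hc₁.le, hC1def]
  have e2 : c₂ ^ (-(2:ℝ)/(α+2)) = C2⁻¹ := by
    rw [neg_div, Real.rpow_neg hc₂.le, hC2def]
  have e3 : μ ^ (-(α/(2*(α+2)))) = P⁻¹ := by
    rw [Real.rpow_neg hμ.le, hPdef]
  rw [e1, e2, e3]
  set B1 : ℝ := Cxi * c ^ 2 * (t : ℝ) / μ + a * c with hB1def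
  set B2 : ℝ := Cxi / c₂ ^ 2 + C1⁻¹ * C2⁻¹ * (a * Q + Cxi * (t : ℝ) ^ ((1:ℝ)/2) * P⁻¹)
    with hB2def
  -- anomaly-freeness gives a lower bound on the sum of squares
  have hAnom : ∀ u, u ≤ t → c < |x u| →
      c₁ * c₂ ^ 2 * |x u| ^ (α + 2) ≤ ∑ r ∈ Finset.range t, x r ^ 2 := by
    intro u hu hcu
    have hxu : 0 < |x u| := hc.trans hcu
    have hcard := hAF u (by omega) hcu
    set F := (Finset.range u).filter (fun s => c₂ * |x u| ≤ |x s|) with hFdef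
    have hsub : F ⊆ Finset.range t :=
      (Finset.filter_subset _ _).trans (Finset.range_subset_range.mpr hu)
    have h1 : (F.card : ℝ) * (c₂ * |x u|) ^ 2 ≤ ∑ r ∈ F, x r ^ 2 := by
      calc (F.card : ℝ) * (c₂ * |x u|) ^ 2 = ∑ _r ∈ F, (c₂ * |x u|) ^ 2 := by
            rw [Finset.sum_const, nsmul_eq_mul]
        _ ≤ ∑ r ∈ F, x r ^ 2 := by
            refine Finset.sum_le_sum fun r hr => ?_
            have hr2 : c₂ * |x u| ≤ |x r| := (Finset.mem_filter.mp hr).2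
            have h0 : (0:ℝ) ≤ c₂ * |x u| := by positivity
            calc (c₂ * |x u|) ^ 2 ≤ |x r| ^ 2 := pow_le_pow_left₀ h0 hr2 2
              _ = x r ^ 2 := sq_abs _
    have h2 : ∑ r ∈ F, x r ^ 2 ≤ ∑ r ∈ Finset.range t, x r ^ 2 :=
      Finset.sum_le_sum_of_subset_of_nonneg hsub fun i _ _ => sq_nonneg _
    have h3 : c₁ * |x u| ^ α * (c₂ * |x u|) ^ 2 ≤ (F.card : ℝ) * (c₂ * |x u|) ^ 2 :=
      mul_le_mul_of_nonneg_right hcard (by positivity)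
    have hsplit : |x u| ^ (α + 2) = |x u| ^ α * |x u| ^ 2 := by
      rw [Real.rpow_add hxu, ← Real.rpow_natCast (|x u|) 2]
      norm_num
    calc c₁ * c₂ ^ 2 * |x u| ^ (α + 2) = c₁ * |x u| ^ α * (c₂ * |x u|) ^ 2 := by
          rw [hsplit]; ring
      _ ≤ (F.card : ℝ) * (c₂ * |x u|) ^ 2 := h3
      _ ≤ ∑ r ∈ F, x r ^ 2 := h1
      _ ≤ ∑ r ∈ Finset.range t, x r ^ 2 := h2
  -- reduce LHS
  have habs2 : a * |μ * S⁻¹ * x t| = a * μ * |x t| / S := by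
    rw [abs_mul, abs_mul, abs_of_pos hμ, abs_of_pos (inv_pos.mpr hS)]
    ring
  have hfirst : (∑ s ∈ Finset.range t, |ξ s * x s * S⁻¹ * x t|) ≤ Cxi * T * |x t| / S := by
    have hstep : ∀ s ∈ Finset.range t,
        |ξ s * x s * S⁻¹ * x t| ≤ |x s| * (Cxi * S⁻¹ * |x t|) := by
      intro s hs
      have hst : s ≤ t - 1 := by have := Finset.mem_range.mp hs; omega
      have hξs : |ξ s| ≤ Cxi := hξ s hst
      have h0 : (0:ℝ) ≤ S⁻¹ := (inv_pos.mpr hS).le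
      calc |ξ s * x s * S⁻¹ * x t| = |ξ s| * |x s| * S⁻¹ * |x t| := by
            rw [abs_mul, abs_mul, abs_mul, abs_of_nonneg h0]
        _ ≤ Cxi * |x s| * S⁻¹ * |x t| := by
            apply mul_le_mul_of_nonneg_right _ (abs_nonneg _)
            apply mul_le_mul_of_nonneg_right _ h0
            exact mul_le_mul_of_nonneg_right hξs (abs_nonneg _)
        _ = |x s| * (Cxi * S⁻¹ * |x t|) := by ring
    calc (∑ s ∈ Finset.range t, |ξ s * x s * S⁻¹ * x t|)
        ≤ ∑ s ∈ Finset.range t, |x s| * (Cxi * S⁻¹ * |x t|) := Finset.sum_le_sum hstep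
      _ = T * (Cxi * S⁻¹ * |x t|) := by rw [← Finset.sum_mul]
      _ = Cxi * T * |x t| / S := by ring
  -- bound the second term
  have hP2 : a * μ * |x t| / S ≤ max B1 B2 := by
    by_cases hxt : |x t| ≤ c
    · refine le_max_of_le_left ?_
      have h1 : a * μ * |x t| / S ≤ a * c := by
        rw [div_le_iff₀ hS]
        have h0 : μ * |x t| ≤ S * c := mul_le_mul hμS hxt (abs_nonneg _) hS.le
        have h1 : a * (μ * |x t|) ≤ a * (S * c) := mul_le_mul_of_nonneg_left h0 ha.le
        linarith
      have h2 : 0 ≤ Cxi * c ^ 2 * (t : ℝ) / μ := by positivity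
      rw [hB1def]; linarith
    · refine le_max_of_le_right ?_
      push_neg at hxt
      have hM : 0 < |x t| := hc.trans hxt
      have hDle : c₁ * c₂ ^ 2 * |x t| ^ (α + 2) ≤ ∑ r ∈ Finset.range t, x r ^ 2 :=
        hAnom t le_rfl hxt
      have hDpos : 0 < c₁ * c₂ ^ 2 * |x t| ^ (α + 2) := by
        have := Real.rpow_pos_of_pos hM (α + 2)
        positivity
      have hDS : c₁ * c₂ ^ 2 * |x t| ^ (α + 2) ≤ S := by rw [hSdef]; linarith
      have hθ0 : (0:ℝ) ≤ (α+1)/(α+2) := by positivity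
      have hθ1 : (α+1)/(α+2) ≤ 1 := by rw [div_le_one hα2]; linarith
      have hgm := gm_le' hμ hDpos hθ0 hθ1 hμS hDS
      have hexp : 1 - (α+1)/(α+2) = (1:ℝ)/(α+2) := by field_simp <;> ring_nf
      rw [hexp, D_rpow' hc₁.le hc₂.le hM.le hα, ← hC1def, ← hC2def] at hgm
      -- hgm : μ ^ ((α+1)/(α+2)) * (C1 * C2 * |x t|) ≤ S
      set R2 : ℝ := a * Q * C1⁻¹ * C2⁻¹ with hR2def
      have hR2 : 0 < R2 := by positivity
      have hμsplit : μ ^ ((α+1)/(α+2)) * Q = μ := by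
        rw [hQdef, ← Real.rpow_add hμ,
          show (α+1)/(α+2) + (1:ℝ)/(α+2) = 1 by field_simp <;> ring_nf, Real.rpow_one]
      have hkey : a * μ * |x t| / S ≤ R2 := by
        rw [div_le_iff₀ hS]
        have h1 : R2 * (μ ^ ((α+1)/(α+2)) * (C1 * C2 * |x t|)) ≤ R2 * S :=
          mul_le_mul_of_nonneg_left hgm hR2.le
        have h2 : R2 * (μ ^ ((α+1)/(α+2)) * (C1 * C2 * |x t|)) = a * μ * |x t| := by
          calc R2 * (μ ^ ((α+1)/(α+2)) * (C1 * C2 * |x t|))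
              = (μ ^ ((α+1)/(α+2)) * Q) * ((C1 * C1⁻¹) * (C2 * C2⁻¹) * (a * |x t|)) := by
                rw [hR2def]; ring
            _ = a * μ * |x t| := by
                rw [hμsplit, mul_inv_cancel₀ hC1.ne', mul_inv_cancel₀ hC2.ne']; ring
        exact h2.symm.trans_le h1
      refine hkey.trans ?_
      rw [hB2def, hR2def]
      have h3 : 0 ≤ Cxi * (t : ℝ) ^ ((1:ℝ)/2) * P⁻¹ := by positivity
      have h4 : 0 ≤ Cxi / c₂ ^ 2 := by positivity
      have h5 : (0:ℝ) ≤ C1⁻¹ * C2⁻¹ := by positivity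
      calc a * Q * C1⁻¹ * C2⁻¹ = C1⁻¹ * C2⁻¹ * (a * Q) := by ring
        _ ≤ C1⁻¹ * C2⁻¹ * (a * Q + Cxi * (t : ℝ) ^ ((1:ℝ)/2) * P⁻¹) :=
            mul_le_mul_of_nonneg_left (le_add_of_nonneg_right h3) h5
        _ ≤ Cxi / c₂ ^ 2 + C1⁻¹ * C2⁻¹ * (a * Q + Cxi * (t : ℝ) ^ ((1:ℝ)/2) * P⁻¹) :=
            le_add_of_nonneg_left h4
  -- bound the first term
  have hP1 : Cxi * T * |x t| / S ≤ max B1 B2 := by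
    obtain ⟨u, humem, humax⟩ := Finset.exists_max_image (Finset.range (t+1))
      (fun s => |x s|) ⟨t, Finset.mem_range.mpr (Nat.lt_succ_self t)⟩
    have hut : u ≤ t := by have := Finset.mem_range.mp humem; omega
    have hMt : |x t| ≤ |x u| := humax t (Finset.mem_range.mpr (Nat.lt_succ_self t))
    by_cases hMc : |x u| ≤ c
    · refine le_max_of_le_left ?_
      have hTle : T ≤ (t:ℝ) * c := by
        calc T ≤ ∑ _s ∈ Finset.range t, c := by
              refine Finset.sum_le_sum fun s hs => ?_
              have hs' : s < t + 1 := by have := Finset.mem_range.mp hs; omega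
              exact (humax s (Finset.mem_range.mpr hs')).trans hMc
          _ = (t:ℝ) * c := by rw [Finset.sum_const, nsmul_eq_mul, Finset.card_range]
      have hnum : Cxi * T * |x t| ≤ Cxi * ((t:ℝ) * c) * c := by
        have h1 : Cxi * T ≤ Cxi * ((t:ℝ) * c) := mul_le_mul_of_nonneg_left hTle hCxi
        have h2 : |x t| ≤ c := hMt.trans hMc
        have h4 : (0:ℝ) ≤ Cxi * ((t:ℝ) * c) :=
          mul_nonneg hCxi (mul_nonneg ht0.le hc.le)
        exact mul_le_mul h1 h2 (abs_nonneg _) h4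
      have hdiv : Cxi * T * |x t| / S ≤ Cxi * ((t:ℝ) * c) * c / μ :=
        div_le_div₀ (by positivity) hnum hμ hμS
      refine hdiv.trans ?_
      rw [hB1def]
      have : Cxi * ((t:ℝ) * c) * c / μ = Cxi * c ^ 2 * (t:ℝ) / μ := by ring
      rw [this]
      have := mul_pos ha hc
      linarith
    · refine le_max_of_le_right ?_
      push_neg at hMc
      have hMu : 0 < |x u| := hc.trans hMc
      have hDle : c₁ * c₂ ^ 2 * |x u| ^ (α + 2) ≤ ∑ r ∈ Finset.range t, x r ^ 2 :=
        hAnom u hut hMc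
      have hDpos : 0 < c₁ * c₂ ^ 2 * |x u| ^ (α + 2) := by
        have := Real.rpow_pos_of_pos hMu (α + 2)
        positivity
      have hDS : c₁ * c₂ ^ 2 * |x u| ^ (α + 2) ≤ S := by rw [hSdef]; linarith
      have hθ0 : (0:ℝ) ≤ α/(α+2) := by positivity
      have hθ1 : α/(α+2) ≤ 1 := by rw [div_le_one hα2]; linarith
      have hgm := gm_le' hμ hDpos hθ0 hθ1 hμS hDS
      have hexp : 1 - α/(α+2) = (2:ℝ)/(α+2) := by field_simp <;> ring_nf
      rw [hexp] at hgm
      -- take square roots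
      have hsq : P * (C1 * C2 * |x u|) ≤ S ^ ((1:ℝ)/2) := by
        have h := Real.rpow_le_rpow (by positivity) hgm (by norm_num : (0:ℝ) ≤ 1/2)
        rw [Real.mul_rpow (by positivity) (by positivity),
          ← Real.rpow_mul hμ.le, ← Real.rpow_mul hDpos.le] at h
        rw [show α/(α+2) * (1/2) = α/(2*(α+2)) by
            rw [div_mul_div_comm, mul_one, mul_comm (α+2) 2],
          show (2:ℝ)/(α+2) * (1/2) = 1/(α+2) by
            rw [div_mul_div_comm, mul_comm (α+2) 2,
              mul_div_mul_left _ _ (by norm_num : (2:ℝ) ≠ 0)],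
          D_rpow' hc₁.le hc₂.le hMu.le hα, ← hC1def, ← hC2def, ← hPdef] at h
        exact h
      have hSh : 0 < S ^ ((1:ℝ)/2) := Real.rpow_pos_of_pos hS _
      have hSS : S ^ ((1:ℝ)/2) * S ^ ((1:ℝ)/2) = S := by
        rw [← Real.rpow_add hS]
        norm_num
      -- Cauchy-Schwarz
      have hT2 : T ^ 2 ≤ (t:ℝ) * S := by
        have hcs := sq_sum_le_card_mul_sum_sq (s := Finset.range t) (f := fun i => |x i|)
        simp only [sq_abs, Finset.card_range] at hcs
        have h2 : (t:ℝ) * (∑ i ∈ Finset.range t, x i ^ 2) ≤ (t:ℝ) * S := by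
          apply mul_le_mul_of_nonneg_left _ ht0.le
          rw [hSdef]; linarith
        calc T ^ 2 ≤ (t:ℝ) * ∑ i ∈ Finset.range t, x i ^ 2 := by exact_mod_cast hcs
          _ ≤ (t:ℝ) * S := h2
      have hTle : T ≤ (t:ℝ) ^ ((1:ℝ)/2) * S ^ ((1:ℝ)/2) := by
        calc T = (T ^ (2:ℕ)) ^ ((1:ℝ)/2) := by
              rw [← Real.rpow_natCast T 2, ← Real.rpow_mul hT0,
                show ((2:ℕ):ℝ) * ((1:ℝ)/2) = 1 by norm_num, Real.rpow_one]
          _ ≤ ((t:ℝ) * S) ^ ((1:ℝ)/2) :=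
              Real.rpow_le_rpow (by positivity) hT2 (by norm_num)
          _ = (t:ℝ) ^ ((1:ℝ)/2) * S ^ ((1:ℝ)/2) := Real.mul_rpow ht0.le hS.le
      set R : ℝ := Cxi * (t:ℝ) ^ ((1:ℝ)/2) * P⁻¹ * C1⁻¹ * C2⁻¹ with hRdef
      have hR : 0 ≤ R := by positivity
      have hkey : Cxi * (t:ℝ) ^ ((1:ℝ)/2) * |x u| ≤ R * S ^ ((1:ℝ)/2) := by
        have h2 : R * (P * (C1 * C2 * |x u|)) = Cxi * (t:ℝ) ^ ((1:ℝ)/2) * |x u| := by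
          calc R * (P * (C1 * C2 * |x u|))
              = (P * P⁻¹) * ((C1 * C1⁻¹) * (C2 * C2⁻¹) * (Cxi * (t:ℝ) ^ ((1:ℝ)/2) * |x u|)) := by
                rw [hRdef]; ring
            _ = Cxi * (t:ℝ) ^ ((1:ℝ)/2) * |x u| := by
                rw [mul_inv_cancel₀ hP.ne', mul_inv_cancel₀ hC1.ne',
                  mul_inv_cancel₀ hC2.ne']; ring
        calc Cxi * (t:ℝ) ^ ((1:ℝ)/2) * |x u| = R * (P * (C1 * C2 * |x u|)) := h2.symm
          _ ≤ R * S ^ ((1:ℝ)/2) := mul_le_mul_of_nonneg_left hsq hR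
      have hfin : Cxi * T * |x t| / S ≤ R := by
        rw [div_le_iff₀ hS]
        have h1 : Cxi * T * |x t| ≤ Cxi * ((t:ℝ) ^ ((1:ℝ)/2) * S ^ ((1:ℝ)/2)) * |x u| := by
          have h3 : Cxi * T ≤ Cxi * ((t:ℝ) ^ ((1:ℝ)/2) * S ^ ((1:ℝ)/2)) :=
            mul_le_mul_of_nonneg_left hTle hCxi
          have h4 : (0:ℝ) ≤ Cxi * ((t:ℝ) ^ ((1:ℝ)/2) * S ^ ((1:ℝ)/2)) :=
            mul_nonneg hCxi (by positivity)
          exact mul_le_mul h3 hMt (abs_nonneg _) h4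
        have h5 : Cxi * ((t:ℝ) ^ ((1:ℝ)/2) * S ^ ((1:ℝ)/2)) * |x u|
            = (Cxi * (t:ℝ) ^ ((1:ℝ)/2) * |x u|) * S ^ ((1:ℝ)/2) := by ring
        have h6 : (Cxi * (t:ℝ) ^ ((1:ℝ)/2) * |x u|) * S ^ ((1:ℝ)/2)
            ≤ (R * S ^ ((1:ℝ)/2)) * S ^ ((1:ℝ)/2) :=
          mul_le_mul_of_nonneg_right hkey hSh.le
        have h7 : (R * S ^ ((1:ℝ)/2)) * S ^ ((1:ℝ)/2) = R * S := by
          rw [mul_assoc, hSS]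
        exact ((h1.trans_eq h5).trans h6).trans_eq h7
      refine hfin.trans ?_
      rw [hB2def, hRdef]
      have h3 : 0 ≤ a * Q := by positivity
      have h4 : 0 ≤ Cxi / c₂ ^ 2 := by positivity
      have h5 : (0:ℝ) ≤ C1⁻¹ * C2⁻¹ := by positivity
      calc Cxi * (t:ℝ) ^ ((1:ℝ)/2) * P⁻¹ * C1⁻¹ * C2⁻¹
          = C1⁻¹ * C2⁻¹ * (Cxi * (t:ℝ) ^ ((1:ℝ)/2) * P⁻¹) := by ring
        _ ≤ C1⁻¹ * C2⁻¹ * (a * Q + Cxi * (t:ℝ) ^ ((1:ℝ)/2) * P⁻¹) :=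
            mul_le_mul_of_nonneg_left (le_add_of_nonneg_left h3) h5
        _ ≤ Cxi / c₂ ^ 2 + C1⁻¹ * C2⁻¹ * (a * Q + Cxi * (t:ℝ) ^ ((1:ℝ)/2) * P⁻¹) :=
            le_add_of_nonneg_left h4
  calc (∑ s ∈ Finset.range t, |ξ s * x s * S⁻¹ * x t|) + a * |μ * S⁻¹ * x t|
      ≤ Cxi * T * |x t| / S + a * μ * |x t| / S := by rw [habs2]; linarith
    _ ≤ max B1 B2 + max B1 B2 := add_le_add hP1 hP2
    _ = 2 * max B1 B2 := by ring
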